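/- arXiv:2605.07231 — 8 statements merged into one kernel-verified Lean document; each statement's English description precedes it below -/
import Mathlib

section
/- Let l_1, l_2 be nonnegative integers and let c_l (−l_1 ≤ l ≤ l_2) be nonnegative reals with \sum_l c_l = 1 and c_0 > 1/2. Define the complex polynomial P(X) = \sum_{l=−l_1}^{l_2} c_l X^{l+l_1} of degree at most l_1+l_2. Then P has no zero on the unit circle |z| = 1, and the number of zeros of P in the open unit disk |z| < 1, counted with multiplicity, equals exactly l_1. (Consequently a one-dimensional translation-invariant stochastic matrix whose self-transition probability exceeds 1/2 has vanishing winding number around the origin.) -/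
open Finset Polynomial Metric Real Complex


open Finset Polynomial Metric Real Complex

lemma circleIntegral_add' {f g : ℂ → ℂ} {c : ℂ} {R : ℝ} (hf : CircleIntegrable f c R)
    (hg : CircleIntegrable g c R) :
    (∮ z in C(c, R), (f z + g z)) = (∮ z in C(c, R), f z) + ∮ z in C(c, R), g z := by
  simp only [circleIntegral, smul_add, intervalIntegral.integral_add hf.out hg.out]

lemma sumInv_continuousOn (M : Multiset ℂ) (h : ∀ r ∈ M, r ∉ sphere (0:ℂ) 1) :
    ContinuousOn (fun z => (M.map fun r => (z - r)⁻¹).sum) (sphere (0:ℂ) 1) := by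
  induction M using Multiset.induction with
  | empty => simpa using continuousOn_const
  | cons a M ih =>
    simp only [Multiset.map_cons, Multiset.sum_cons]
    refine ContinuousOn.add ?_ (ih fun r hr => h r (Multiset.mem_cons_of_mem hr))
    exact ContinuousOn.inv₀ (continuousOn_id.sub continuousOn_const)
      (fun z hz => sub_ne_zero.2 (fun he => h a (Multiset.mem_cons_self a M) (he ▸ hz)))

lemma integral_single_inv {a : ℂ} (h : a ∉ sphere (0:ℂ) 1) :
    (∮ z in C(0, 1), (z - a)⁻¹) =
      if ‖a‖ < 1 then 2 * π * I else 0 := by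
  split_ifs with ha
  · exact circleIntegral.integral_sub_inv_of_mem_ball (by simpa [Complex.dist_eq] using ha)
  · have ha' : 1 < ‖a‖ := by
      rcases lt_trichotomy (‖a‖) 1 with h1 | h1 | h1
      · exact absurd h1 ha
      · exact absurd (by simpa [mem_sphere_iff_norm] using h1) h
      · exact h1
    refine Complex.circleIntegral_eq_zero_of_differentiable_on_off_countable zero_le_one
      Set.countable_empty ?_ ?_
    · refine ContinuousOn.inv₀ (continuousOn_id.sub continuousOn_const) (fun z hz => ?_)
      refine sub_ne_zero.2 (fun he => ?_)
      rw [mem_closedBall, Complex.dist_eq, sub_zero] at hz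
      exact absurd (he ▸ hz) (not_le.2 ha')
    · intro z hz
      refine DifferentiableAt.inv (differentiableAt_id.sub (differentiableAt_const a)) ?_
      refine sub_ne_zero.2 (fun he => ?_)
      rw [Set.mem_diff, mem_ball, Complex.dist_eq, sub_zero] at hz
      exact absurd (he ▸ hz.1) (not_lt.2 ha'.le)

lemma integral_sumInv (M : Multiset ℂ) (h : ∀ r ∈ M, r ∉ sphere (0:ℂ) 1) :
    (∮ z in C(0, 1), (M.map fun r => (z - r)⁻¹).sum) =
      2 * π * I * (Multiset.card (M.filter fun r => ‖r‖ < 1)) := by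
  induction M using Multiset.induction with
  | empty => simp [circleIntegral]
  | cons a M ih =>
    have hM : ∀ r ∈ M, r ∉ sphere (0:ℂ) 1 := fun r hr => h r (Multiset.mem_cons_of_mem hr)
    have ha : a ∉ sphere (0:ℂ) 1 := h a (Multiset.mem_cons_self a M)
    have hint1 : CircleIntegrable (fun z => (z - a)⁻¹) 0 1 :=
      circleIntegrable_sub_inv_iff.2 (Or.inr (by simpa using ha))
    have hint2 : CircleIntegrable (fun z => (M.map fun r => (z - r)⁻¹).sum) 0 1 :=
      (sumInv_continuousOn M hM).circleIntegrable zero_le_one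
    simp only [Multiset.map_cons, Multiset.sum_cons]
    rw [circleIntegral_add' hint1 hint2, ih hM, integral_single_inv ha,
      Multiset.filter_cons]
    split_ifs with hlt
    · simp [Multiset.card_cons]; ring
    · simp

open Finset Polynomial Metric Real Complex

lemma eval_derivative_prod (M : Multiset ℂ) (z : ℂ) (hz : ∀ r ∈ M, z ≠ r) :
    eval z (derivative (M.map fun r => X - C r).prod) =
      eval z (M.map fun r => X - C r).prod * (M.map fun r => (z - r)⁻¹).sum := by
  induction M using Multiset.induction with
  | empty => simp
  | cons a M ih =>
    have hza : z - a ≠ 0 := sub_ne_zero.2 (hz a (Multiset.mem_cons_self a M))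
    have ih' := ih fun r hr => hz r (Multiset.mem_cons_of_mem hr)
    simp only [Multiset.map_cons, Multiset.prod_cons, Multiset.sum_cons, derivative_mul,
      derivative_sub, derivative_X, derivative_C, sub_zero, one_mul, eval_add, eval_mul,
      eval_sub, eval_X, eval_C, ih']
    field_simp

lemma arg_principle (p : Polynomial ℂ)
    (h : ∀ z ∈ sphere (0:ℂ) 1, eval z p ≠ 0) :
    (∮ z in C(0, 1), eval z (derivative p) / eval z p) =
      2 * π * I * (Multiset.card (p.roots.filter fun z => ‖z‖ < 1)) := by
  have hroots : Multiset.card p.roots = p.natDegree :=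
    (Polynomial.splits_iff_card_roots).1 (IsAlgClosed.splits p)
  have hfac := Polynomial.C_leadingCoeff_mul_prod_multiset_X_sub_C hroots
  have hnotmem : ∀ r ∈ p.roots, r ∉ sphere (0:ℂ) 1 := by
    intro r hr hsph
    exact h r hsph (Polynomial.isRoot_of_mem_roots hr)
  have key : ∀ z ∈ sphere (0:ℂ) 1,
      eval z (derivative p) / eval z p = (p.roots.map fun r => (z - r)⁻¹).sum := by
    intro z hz
    have hz' : ∀ r ∈ p.roots, z ≠ r := by
      intro r hr he; exact hnotmem r hr (he ▸ hz)
    have h1 : eval z (derivative p)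
        = eval z p * (p.roots.map fun r => (z - r)⁻¹).sum := by
      have hd : derivative p
          = C p.leadingCoeff * derivative (p.roots.map fun r => X - C r).prod := by
        conv_lhs => rw [← hfac]
        rw [derivative_mul, derivative_C, zero_mul, zero_add]
      have he : eval z p
          = p.leadingCoeff * eval z (p.roots.map fun r => X - C r).prod := by
        conv_lhs => rw [← hfac]
        rw [eval_mul, eval_C]
      rw [hd, eval_mul, eval_C, eval_derivative_prod p.roots z hz', he]
      ring
    rw [h1, mul_comm, mul_div_assoc, div_self (h z hz), mul_one]
  calc (∮ z in C(0, 1), eval z (derivative p) / eval z p)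
      = ∮ z in C(0, 1), (p.roots.map fun r => (z - r)⁻¹).sum :=
        circleIntegral.integral_congr zero_le_one (fun z hz => key z hz)
    _ = 2 * π * I * (Multiset.card (p.roots.filter fun z => ‖z‖ < 1)) :=
        integral_sumInv p.roots hnotmem
lemma pow_pred_mul (n : ℕ) (z : ℂ) : (n : ℂ) * z ^ (n - 1) * z = n * z ^ n := by
  cases n with
  | zero => simp
  | succ m => rw [Nat.add_sub_cancel, mul_assoc, ← pow_succ]

lemma integral_logDeriv (p : Polynomial ℂ) (n : ℕ)
    (hslit : ∀ z ∈ sphere (0:ℂ) 1, eval z p / z ^ n ∈ Complex.slitPlane) :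
    (∮ z in C(0, 1), eval z (derivative p) / eval z p) = 2 * π * I * n := by
  have hz0 : ∀ z ∈ sphere (0:ℂ) 1, z ≠ 0 := by
    intro z hz h0
    rw [mem_sphere_iff_norm, h0] at hz; simp at hz
  have hpz : ∀ z ∈ sphere (0:ℂ) 1, eval z p ≠ 0 := by
    intro z hz h0
    have := hslit z hz
    rw [h0, zero_div] at this
    exact Complex.zero_notMem_slitPlane this
  set g : ℂ → ℂ := fun z => Complex.log (eval z p / z ^ n) with hg
  set d : ℂ → ℂ := fun z => eval z (derivative p) / eval z p - n / z with hd
  have hderiv : ∀ z ∈ sphere (0:ℂ) 1, HasDerivAt g (d z) z := by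
    intro z hz
    have hz' := hz0 z hz
    have hzn : z ^ n ≠ 0 := pow_ne_zero n hz'
    have hq : HasDerivAt (fun w => eval w p / w ^ n)
        ((eval z (derivative p) * z ^ n - eval z p * ((n : ℂ) * z ^ (n - 1))) / (z ^ n) ^ 2) z :=
      (p.hasDerivAt z).div (hasDerivAt_pow n z) hzn
    have hlog := hq.clog (hslit z hz)
    convert hlog using 1
    have h1 : (n : ℂ) / z = ((n : ℂ) * z ^ (n - 1)) / z ^ n := by
      rw [div_eq_div_iff hz' hzn]
      exact (pow_pred_mul n z).symm
    show eval z (derivative p) / eval z p - (n : ℂ) / z = _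
    rw [h1, div_sub_div _ _ (hpz z hz) hzn, div_div]
    have h2 : (z ^ n) ^ 2 * (eval z p / z ^ n) = eval z p * z ^ n := by
      field_simp
    rw [h2]
  have hcont : ContinuousOn (fun z => eval z (derivative p) / eval z p) (sphere (0:ℂ) 1) :=
    (p.derivative.continuous_aeval).continuousOn.div p.continuous_aeval.continuousOn hpz
  have hcontinv : ContinuousOn (fun z : ℂ => (n : ℂ) / z) (sphere (0:ℂ) 1) :=
    continuousOn_const.div continuousOn_id hz0
  have hcontd : ContinuousOn d (sphere (0:ℂ) 1) := hcont.sub hcontinv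
  have key : (∮ z in C(0, 1), d z) = 0 := by
    have hF : ∀ θ ∈ Set.uIcc (0:ℝ) (2*π), HasDerivAt (fun t => g (circleMap 0 1 t))
        (circleMap 0 1 θ * I * d (circleMap 0 1 θ)) θ := by
      intro θ _
      have hmem : circleMap 0 1 θ ∈ sphere (0:ℂ) 1 := circleMap_mem_sphere 0 zero_le_one θ
      have h2 := (hderiv _ hmem).comp θ (hasDerivAt_circleMap 0 1 θ)
      simpa [mul_comm, Function.comp_def] using h2
    have hcc : ContinuousOn (fun θ : ℝ => circleMap 0 1 θ * I * d (circleMap 0 1 θ))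
        (Set.uIcc (0:ℝ) (2*π)) := by
      apply ContinuousOn.mul
      · exact ((continuous_circleMap 0 1).mul continuous_const).continuousOn
      · exact hcontd.comp (continuous_circleMap 0 1).continuousOn
          (fun θ _ => circleMap_mem_sphere 0 zero_le_one θ)
    have hFi : IntervalIntegrable (fun θ : ℝ => circleMap 0 1 θ * I * d (circleMap 0 1 θ))
        MeasureTheory.volume 0 (2*π) := hcc.intervalIntegrable
    have heq := intervalIntegral.integral_eq_sub_of_hasDerivAt hF hFi
    have hdef : (∮ z in C(0, 1), d z)
        = ∫ θ in (0:ℝ)..(2*π), circleMap 0 1 θ * I * d (circleMap 0 1 θ) := by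
      simp only [circleIntegral, deriv_circleMap, smul_eq_mul]
    rw [hdef, heq]
    have hper : circleMap 0 1 (2*π) = circleMap 0 1 0 := by
      have := periodic_circleMap 0 1 0
      simpa using this
    rw [hper, sub_self]
  have hid : Set.EqOn (fun z : ℂ => eval z (derivative p) / eval z p)
      (fun z : ℂ => d z + (n : ℂ) / z) (sphere (0:ℂ) 1) := by
    intro z _
    simp only [hd]; ring
  rw [circleIntegral.integral_congr zero_le_one hid,
    circleIntegral_add' (hcontd.circleIntegrable zero_le_one)
      (hcontinv.circleIntegrable zero_le_one), key, zero_add]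
  have hinv : (∮ z in C(0, 1), (n : ℂ) / z) = (n : ℂ) * (2 * π * I) := by
    have hcongr : Set.EqOn (fun z : ℂ => (n : ℂ) / z)
        (fun z : ℂ => (n : ℂ) • (z - 0)⁻¹) (sphere (0:ℂ) 1) := by
      intro z _; simp [div_eq_mul_inv]
    rw [circleIntegral.integral_congr zero_le_one hcongr, circleIntegral.integral_smul,
      circleIntegral.integral_sub_inv_of_mem_ball (by simp : (0:ℂ) ∈ ball (0:ℂ) 1)]
    simp
  rw [hinv]; ring
/-- For a finite-range one-dimensional translation-invariant stochastic process with
transition probabilities `c l` (`-l₁ ≤ l ≤ l₂`), `∑ c l = 1` and self-transition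
probability `c 0 > 1/2`, the polynomial `P(X) = ∑ c l * X^(l + l₁)` has no zero on the
unit circle and exactly `l₁` zeros (with multiplicity) in the open unit disk. -/
theorem zeros_in_disk_of_lazy_walk (l₁ l₂ : ℕ) (c : ℤ → ℝ)
    (hnn : ∀ l ∈ Finset.Icc (-(l₁ : ℤ)) (l₂ : ℤ), 0 ≤ c l)
    (hsum : ∑ l ∈ Finset.Icc (-(l₁ : ℤ)) (l₂ : ℤ), c l = 1)
    (hlazy : 1 / 2 < c 0) :
    (∀ z : ℂ, ‖z‖ = 1 →
      Polynomial.eval z (∑ l ∈ Finset.Icc (-(l₁ : ℤ)) (l₂ : ℤ),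
        Polynomial.C ((c l : ℂ)) * Polynomial.X ^ (l + l₁).toNat) ≠ 0) ∧
    (Multiset.card ((∑ l ∈ Finset.Icc (-(l₁ : ℤ)) (l₂ : ℤ),
        Polynomial.C ((c l : ℂ)) * Polynomial.X ^ (l + l₁).toNat).roots.filter
          (fun z => ‖z‖ < 1)) = l₁) := by
  set S : Finset ℤ := Finset.Icc (-(l₁ : ℤ)) (l₂ : ℤ) with hS
  set P : Polynomial ℂ := ∑ l ∈ S, Polynomial.C ((c l : ℂ)) * Polynomial.X ^ (l + l₁).toNat
    with hP
  have h0S : (0 : ℤ) ∈ S := by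
    simp [hS, Finset.mem_Icc]
  have hc0 : (0 : ℝ) < c 0 := lt_trans (by norm_num) hlazy
  have hc0le : c 0 ≤ 1 := hsum ▸ Finset.single_le_sum hnn h0S
  have heval : ∀ z : ℂ, eval z P = ∑ l ∈ S, (c l : ℂ) * z ^ (l + l₁).toNat := by
    intro z
    rw [hP, eval_finset_sum]
    exact Finset.sum_congr rfl fun l _ => by rw [eval_mul, eval_C, eval_pow, eval_X]
  have herase : ∑ l ∈ S.erase 0, c l = 1 - c 0 := by
    have := Finset.sum_erase_add S c h0S
    rw [hsum] at this
    linarith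
  -- key estimate
  have hkey : ∀ z : ℂ, ‖z‖ = 1 →
      ‖eval z P - (c 0 : ℂ) * z ^ l₁‖ ≤ 1 - c 0 := by
    intro z hz
    have : eval z P - (c 0 : ℂ) * z ^ l₁ = ∑ l ∈ S.erase 0, (c l : ℂ) * z ^ (l + l₁).toNat := by
      rw [heval]
      rw [← Finset.sum_erase_add S (fun l => (c l : ℂ) * z ^ (l + l₁).toNat) h0S]
      simp only [zero_add, Int.toNat_natCast]
      ring
    rw [this]
    calc ‖∑ l ∈ S.erase 0, (c l : ℂ) * z ^ (l + l₁).toNat‖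
        ≤ ∑ l ∈ S.erase 0, ‖(c l : ℂ) * z ^ (l + l₁).toNat‖ :=
          norm_sum_le _ _
      _ = ∑ l ∈ S.erase 0, c l := by
          refine Finset.sum_congr rfl fun l hl => ?_
          rw [norm_mul, norm_pow, hz, one_pow, mul_one, Complex.norm_real, Real.norm_eq_abs,
            _root_.abs_of_nonneg (hnn l (Finset.mem_of_mem_erase hl))]
      _ = 1 - c 0 := herase
  have habs0 : ∀ z : ℂ, ‖z‖ = 1 → ‖(c 0 : ℂ) * z ^ l₁‖ = c 0 := by
    intro z hz
    rw [norm_mul, norm_pow, hz, one_pow, mul_one, Complex.norm_real, Real.norm_eq_abs, _root_.abs_of_nonneg hc0.le]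
  -- Part 1: no zeros on the circle
  have part1 : ∀ z : ℂ, ‖z‖ = 1 → eval z P ≠ 0 := by
    intro z hz hzero
    have h1 := hkey z hz
    rw [hzero, zero_sub, norm_neg, habs0 z hz] at h1
    linarith
  -- slit plane condition
  have hslit : ∀ z ∈ Metric.sphere (0 : ℂ) 1, eval z P / z ^ l₁ ∈ Complex.slitPlane := by
    intro z hz
    rw [mem_sphere_iff_norm, sub_zero] at hz
    have hz0 : z ≠ 0 := by
      intro h; rw [h] at hz; simp at hz
    have hzn : z ^ l₁ ≠ 0 := pow_ne_zero _ hz0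
    have habszn : ‖z ^ l₁‖ = 1 := by rw [norm_pow, hz, one_pow]
    have hw : ‖eval z P / z ^ l₁ - (c 0 : ℂ)‖ ≤ 1 - c 0 := by
      have : eval z P / z ^ l₁ - (c 0 : ℂ) = (eval z P - (c 0 : ℂ) * z ^ l₁) / z ^ l₁ := by
        field_simp
      rw [this, norm_div, habszn, div_one]
      exact hkey z hz
    have hre : (eval z P / z ^ l₁ - (c 0 : ℂ)).re ≥ -(1 - c 0) := by
      have h2 := Complex.abs_re_le_norm (eval z P / z ^ l₁ - (c 0 : ℂ))
      have h3 := neg_abs_le (eval z P / z ^ l₁ - (c 0 : ℂ)).re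
      linarith
    have hre2 : (eval z P / z ^ l₁).re > 0 := by
      have h4 : (eval z P / z ^ l₁ - (c 0 : ℂ)).re = (eval z P / z ^ l₁).re - c 0 := by
        simp [Complex.sub_re, Complex.ofReal_re]
      rw [h4] at hre
      linarith
    exact Or.inl hre2
  -- the two integral computations
  have hsphere : ∀ z ∈ Metric.sphere (0 : ℂ) 1, eval z P ≠ 0 := by
    intro z hz
    rw [mem_sphere_iff_norm, sub_zero] at hz
    exact part1 z hz
  have h1 := arg_principle P hsphere
  have h2 := integral_logDeriv P l₁ hslit
  rw [h1] at h2
  have hpiI : (2 * (π : ℂ) * I) ≠ 0 := by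
    simp [Real.pi_ne_zero, Complex.I_ne_zero, Complex.ofReal_ne_zero]
  have h3 : ((Multiset.card (P.roots.filter fun z => ‖z‖ < 1)) : ℂ) = (l₁ : ℂ) :=
    mul_left_cancel₀ hpiI h2
  exact ⟨part1, Nat.cast_injective h3⟩
end

section
/- (Parity formula) Let p be a nonzero polynomial with real coefficients such that p has no complex zero on the unit circle |z| = 1. Let N_0 denote the number of complex zeros of p in the open unit disk |z| < 1, counted with multiplicity. Then (−1)^{N_0} = sgn(p(1) · p(−1)); equivalently, p(1)·p(−1) > 0 if N_0 is even and p(1)·p(−1) < 0 if N_0 is odd. -/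
open Polynomial

private lemma parity_key : ∀ (n : ℕ) (s : Multiset ℂ),
    Multiset.card s = n →
    Multiset.map (starRingEnd ℂ) s = s →
    (∀ r ∈ s, ‖r‖ ≠ 1) →
    ∃ t : ℝ, 0 < t ∧ (s.map (fun r => r ^ 2 - 1)).prod =
      (((-1:ℝ) ^ (Multiset.card (s.filter (fun z => ‖z‖ < 1))) * t : ℝ) : ℂ) := by
  intro n
  induction n using Nat.strong_induction_on with
  | _ n ih =>
    intro s hcard hconj habs
    rcases Multiset.empty_or_exists_mem s with rfl | ⟨r, hr⟩
    · exact ⟨1, one_pos, by simp⟩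
    by_cases him : r.im = 0
    · -- real root case
      have hrx : ((r.re : ℂ)) = r := by
        apply Complex.ext <;> simp [him]
      obtain ⟨s', rfl⟩ : ∃ s', s = r ::ₘ s' := ⟨s.erase r, (Multiset.cons_erase hr).symm⟩
      have hconj' : Multiset.map (starRingEnd ℂ) s' = s' := by
        have hcr : (starRingEnd ℂ) r = r := Complex.conj_eq_iff_im.mpr him
        rw [Multiset.map_cons, hcr] at hconj
        exact (Multiset.cons_inj_right r).mp hconj
      have hcard' : Multiset.card s' < n := by
        simp only [Multiset.card_cons] at hcard; omega
      obtain ⟨t, ht, hprod⟩ := ih _ hcard' s' rfl hconj'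
        (fun z hz => habs z (Multiset.mem_cons_of_mem hz))
      have habsr : ‖r‖ ≠ 1 := habs r (Multiset.mem_cons_self r s')
      have habsre : |r.re| ≠ 1 := by rwa [← hrx, Complex.norm_real, Real.norm_eq_abs] at habsr
      by_cases hin : ‖r‖ < 1
      · have hre : r.re ^ 2 < 1 := by
          have h1 : |r.re| < 1 := by rwa [← hrx, Complex.norm_real, Real.norm_eq_abs] at hin
          nlinarith [abs_nonneg r.re, sq_abs r.re]
        have hf : Multiset.filter (fun z => ‖z‖ < 1) (r ::ₘ s')
            = r ::ₘ Multiset.filter (fun z => ‖z‖ < 1) s' :=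
          Multiset.filter_cons_of_pos _ hin
        refine ⟨(1 - r.re ^ 2) * t, mul_pos (by linarith) ht, ?_⟩
        rw [Multiset.map_cons, Multiset.prod_cons, hprod, hf, Multiset.card_cons, ← hrx]
        push_cast
        simp only [Complex.ofReal_re]
        ring
      · have h1 : 1 ≤ |r.re| := by
          by_contra h
          push_neg at h
          exact hin (by rwa [← hrx, Complex.norm_real, Real.norm_eq_abs])
        have hre : 1 < r.re ^ 2 := by
          rcases lt_or_eq_of_le h1 with h2 | h2
          · nlinarith [sq_abs r.re]
          · exact absurd h2.symm habsre
        have hf : Multiset.filter (fun z => ‖z‖ < 1) (r ::ₘ s')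
            = Multiset.filter (fun z => ‖z‖ < 1) s' :=
          Multiset.filter_cons_of_neg _ hin
        refine ⟨(r.re ^ 2 - 1) * t, mul_pos (by linarith) ht, ?_⟩
        rw [Multiset.map_cons, Multiset.prod_cons, hprod, hf, ← hrx]
        push_cast
        simp only [Complex.ofReal_re]
        ring
    · -- nonreal root case: pair with conjugate
      have hcr_ne : (starRingEnd ℂ) r ≠ r := fun h => him (Complex.conj_eq_iff_im.mp h)
      have hcr_mem : (starRingEnd ℂ) r ∈ s := by
        rw [← hconj]; exact Multiset.mem_map_of_mem _ hr
      have hcr_mem' : (starRingEnd ℂ) r ∈ s.erase r :=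
        (Multiset.mem_erase_of_ne hcr_ne).mpr hcr_mem
      set s'' := (s.erase r).erase ((starRingEnd ℂ) r) with hs''
      have hs_eq : s = r ::ₘ (starRingEnd ℂ) r ::ₘ s'' := by
        rw [hs'', Multiset.cons_erase hcr_mem', Multiset.cons_erase hr]
      have hinj : Function.Injective (starRingEnd ℂ) := (starRingEnd ℂ).injective
      have hconj'' : Multiset.map (starRingEnd ℂ) s'' = s'' := by
        rw [hs'', Multiset.map_erase _ hinj, Multiset.map_erase _ hinj, hconj,
          Complex.conj_conj, Multiset.erase_comm]
      have hcard'' : Multiset.card s'' < n := by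
        have := congrArg Multiset.card hs_eq
        simp only [Multiset.card_cons] at this
        omega
      obtain ⟨t, ht, hprod⟩ := ih _ hcard'' s'' rfl hconj''
        (fun z hz => habs z (by rw [hs_eq]; exact Multiset.mem_cons_of_mem (Multiset.mem_cons_of_mem hz)))
      have hr2 : r ^ 2 - 1 ≠ 0 := by
        intro h
        have h2 : (r - 1) * (r + 1) = 0 := by linear_combination h
        rcases mul_eq_zero.mp h2 with h' | h'
        · exact him (by rw [sub_eq_zero.mp h']; simp)
        · exact him (by rw [eq_neg_of_add_eq_zero_left h']; simp)
      have hfac : (r ^ 2 - 1) * ((starRingEnd ℂ) r ^ 2 - 1)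
          = ((Complex.normSq (r ^ 2 - 1) : ℝ) : ℂ) := by
        have hc : (starRingEnd ℂ) (r ^ 2 - 1) = (starRingEnd ℂ) r ^ 2 - 1 := by
          simp
        rw [← hc, Complex.mul_conj]
      have hnsq : 0 < Complex.normSq (r ^ 2 - 1) := Complex.normSq_pos.mpr hr2
      refine ⟨Complex.normSq (r ^ 2 - 1) * t, mul_pos hnsq ht, ?_⟩
      have habs_conj : ‖(starRingEnd ℂ) r‖ = ‖r‖ := Complex.norm_conj r
      rw [hs_eq, Multiset.map_cons, Multiset.map_cons, Multiset.prod_cons, Multiset.prod_cons,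
        hprod, ← mul_assoc, hfac]
      by_cases hin : ‖r‖ < 1
      · have hf : Multiset.filter (fun z => ‖z‖ < 1) (r ::ₘ (starRingEnd ℂ) r ::ₘ s'')
            = r ::ₘ (starRingEnd ℂ) r ::ₘ Multiset.filter (fun z => ‖z‖ < 1) s'' := by
          rw [Multiset.filter_cons_of_pos (p := fun z => ‖z‖ < 1) _ hin,
            Multiset.filter_cons_of_pos (p := fun z => ‖z‖ < 1) _ (show ‖(starRingEnd ℂ) r‖ < 1 by rwa [habs_conj])]
        rw [hf]
        simp only [Multiset.card_cons]
        push_cast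
        ring
      · have hf : Multiset.filter (fun z => ‖z‖ < 1) (r ::ₘ (starRingEnd ℂ) r ::ₘ s'')
            = Multiset.filter (fun z => ‖z‖ < 1) s'' := by
          rw [Multiset.filter_cons_of_neg (p := fun z => ‖z‖ < 1) _ hin,
            Multiset.filter_cons_of_neg (p := fun z => ‖z‖ < 1) _ (show ¬ ‖(starRingEnd ℂ) r‖ < 1 by rwa [habs_conj])]
        rw [hf]
        push_cast
        ring

/-- Parity formula: for a nonzero real polynomial with no complex zero on the unit circle,
the parity of the number `N₀` of its complex zeros in the open unit disk (with multiplicity)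
is given by `(-1)^N₀ = sgn (p(1) * p(-1))`. -/
theorem parity_formula (p : Polynomial ℝ) (hp : p ≠ 0)
    (hcirc : ∀ z : ℂ, ‖z‖ = 1 → (p.map (algebraMap ℝ ℂ)).eval z ≠ 0) :
    ((-1 : ℝ)) ^ (Multiset.card ((p.map (algebraMap ℝ ℂ)).roots.filter
        (fun z => ‖z‖ < 1)))
      = Real.sign (p.eval 1 * p.eval (-1)) := by
  set q := p.map (algebraMap ℝ ℂ) with hqdef
  have hq : q ≠ 0 := by
    simpa [hqdef] using (Polynomial.map_ne_zero hp : p.map (algebraMap ℝ ℂ) ≠ 0)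
  have hsplit : q.Splits := IsAlgClosed.splits q
  have hfact : q = C q.leadingCoeff * (q.roots.map fun r => X - C r).prod :=
    hsplit.eq_prod_roots
  have hmapconj : q.map (starRingEnd ℂ) = q := by
    rw [hqdef, Polynomial.map_map]
    congr 1
    ext x
    simp [Complex.conj_ofReal]
  have hroots : Multiset.map (starRingEnd ℂ) q.roots = q.roots := by
    have h := hsplit.roots_map (starRingEnd ℂ)
    rw [hmapconj] at h
    exact h.symm
  have habs' : ∀ r ∈ q.roots, ‖r‖ ≠ 1 := by
    intro r hrr h1
    exact hcirc r h1 ((Polynomial.mem_roots hq).mp hrr)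
  obtain ⟨t, ht, hprod⟩ := parity_key _ q.roots rfl hroots habs'
  have e1 : q.eval 1 = q.leadingCoeff * (q.roots.map fun r => 1 - r).prod := by
    conv_lhs => rw [hfact]
    simp [Polynomial.eval_multiset_prod, Multiset.map_map, Function.comp]
  have em1 : q.eval (-1) = q.leadingCoeff * (q.roots.map fun r => -1 - r).prod := by
    conv_lhs => rw [hfact]
    simp [Polynomial.eval_multiset_prod, Multiset.map_map, Function.comp]
  have hprod2 : (q.roots.map fun r => 1 - r).prod * (q.roots.map fun r => -1 - r).prod
      = (q.roots.map fun r => r ^ 2 - 1).prod := by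
    rw [← Multiset.prod_map_mul]
    congr 1
    apply Multiset.map_congr rfl
    intro x _
    ring
  have hlc : q.leadingCoeff = ((p.leadingCoeff : ℝ) : ℂ) := by
    rw [hqdef]
    exact Polynomial.leadingCoeff_map_of_injective (algebraMap ℝ ℂ).injective p
  have hev1 : q.eval 1 = ((p.eval 1 : ℝ) : ℂ) := by
    rw [hqdef, Polynomial.eval_map]
    simpa using Polynomial.eval₂_at_apply (algebraMap ℝ ℂ) 1
  have hevm1 : q.eval (-1) = ((p.eval (-1) : ℝ) : ℂ) := by
    rw [hqdef, Polynomial.eval_map]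
    have := Polynomial.eval₂_at_apply (p := p) (algebraMap ℝ ℂ) (-1)
    simpa using this
  set N := Multiset.card (q.roots.filter (fun z => ‖z‖ < 1)) with hN
  have hkey : ((p.eval 1 * p.eval (-1) : ℝ) : ℂ)
      = ((p.leadingCoeff ^ 2 * ((-1 : ℝ) ^ N * t) : ℝ) : ℂ) := by
    push_cast
    rw [← hev1, ← hevm1, e1, em1, hlc]
    calc ((p.leadingCoeff : ℝ) : ℂ) * (q.roots.map fun r => 1 - r).prod
        * (((p.leadingCoeff : ℝ) : ℂ) * (q.roots.map fun r => -1 - r).prod)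
        = ((p.leadingCoeff : ℝ) : ℂ) ^ 2 *
          ((q.roots.map fun r => 1 - r).prod * (q.roots.map fun r => -1 - r).prod) := by ring
      _ = ((p.leadingCoeff : ℝ) : ℂ) ^ 2 * (q.roots.map fun r => r ^ 2 - 1).prod := by
          rw [hprod2]
      _ = _ := by rw [hprod]; push_cast; ring
  have hreal : p.eval 1 * p.eval (-1) = p.leadingCoeff ^ 2 * ((-1 : ℝ) ^ N * t) :=
    Complex.ofReal_injective hkey
  have hlc0 : p.leadingCoeff ≠ 0 := Polynomial.leadingCoeff_ne_zero.mpr hp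
  have hlcpos : 0 < p.leadingCoeff ^ 2 := pow_two_pos_of_ne_zero hlc0
  rw [hreal]
  rcases Nat.even_or_odd N with he | ho
  · have hpos : 0 < p.leadingCoeff ^ 2 * ((1 : ℝ) * t) := by
      rw [one_mul]; exact mul_pos hlcpos ht
    rw [he.neg_one_pow, Real.sign_of_pos hpos]
  · have hneg : p.leadingCoeff ^ 2 * ((-1 : ℝ) * t) < 0 := by nlinarith
    rw [ho.neg_one_pow, Real.sign_of_neg hneg]
end

section
/- Let l_1, l_2 be nonnegative integers and let c_l (−l_1 ≤ l ≤ l_2) be nonnegative reals with \sum_l c_l = 1. Define P(X) = \sum_{l=−l_1}^{l_2} c_l X^{l+l_1}, and assume P has no complex zero on the unit circle. Let N_0 be the number of zeros of P in the open unit disk counted with multiplicity. Then (−1)^{N_0 − l_1} equals the sign of \sum_l (−1)^l c_l. (This is the relation (−1)^{w(T,0)} = sgn ξ(π) for a one-dimensional stochastic matrix, using ξ(0) = 1.) -/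
open Finset Polynomial

section Aux
open Multiset

lemma filter_abs_cons_pos (a : ℂ) (s : Multiset ℂ) (h : ‖a‖ < 1) :
    Multiset.filter (fun z => ‖z‖ < 1) (a ::ₘ s)
      = a ::ₘ Multiset.filter (fun z => ‖z‖ < 1) s :=
  Multiset.filter_cons_of_pos s h

lemma filter_abs_cons_neg (a : ℂ) (s : Multiset ℂ) (h : ¬ ‖a‖ < 1) :
    Multiset.filter (fun z => ‖z‖ < 1) (a ::ₘ s)
      = Multiset.filter (fun z => ‖z‖ < 1) s :=
  Multiset.filter_cons_of_neg s h

lemma aux_prod (S : Multiset ℂ) (hconj : S.map (starRingEnd ℂ) = S)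
    (hne : ∀ r ∈ S, ‖r‖ ≠ 1) :
    ∃ u : ℝ, 0 < u ∧
      (S.map (fun r => r ^ 2 - 1)).prod =
        (((-1 : ℝ) ^ (Multiset.card (S.filter (fun z => ‖z‖ < 1))) * u : ℝ) : ℂ) := by
  induction S using Multiset.strongInductionOn with
  | ih S ih =>
  rcases Multiset.empty_or_exists_mem S with rfl | ⟨r, hr⟩
  · exact ⟨1, one_pos, by simp⟩
  have hconjmem : (starRingEnd ℂ) r ∈ S := by
    rw [← hconj]; exact Multiset.mem_map_of_mem _ hr
  by_cases him : r.im = 0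
  · -- real root
    have hrre : (r.re : ℂ) = r := by
      simp [Complex.ext_iff, him]
    have hconjr : (starRingEnd ℂ) r = r := Complex.conj_eq_iff_im.mpr him
    set S' := S.erase r with hS'
    have hcons : r ::ₘ S' = S := Multiset.cons_erase hr
    have hconj' : S'.map (starRingEnd ℂ) = S' := by
      rw [hS', Multiset.map_erase _ (starRingEnd ℂ).injective, hconj, hconjr]
    have hne' : ∀ x ∈ S', ‖x‖ ≠ 1 := fun x hx =>
      hne x (Multiset.mem_of_mem_erase hx)
    obtain ⟨u, hu, hprod⟩ := ih S' (Multiset.erase_lt.mpr hr) hconj' hne'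
    have habs : ‖r‖ = |r.re| := by
      rw [← hrre, Complex.norm_real]; simp
    have hfac : r ^ 2 - 1 = ((r.re ^ 2 - 1 : ℝ) : ℂ) := by
      rw [← hrre]; push_cast; simp
    by_cases hlt : ‖r‖ < 1
    · have hlt' : |r.re| < 1 := habs ▸ hlt
      have hre2 : r.re ^ 2 - 1 < 0 := by
        nlinarith [le_abs_self r.re, neg_abs_le r.re, abs_nonneg r.re]
      refine ⟨(1 - r.re ^ 2) * u, by nlinarith, ?_⟩
      rw [← hcons, Multiset.map_cons, Multiset.prod_cons, hprod,
        filter_abs_cons_pos r S' hlt, Multiset.card_cons, hfac]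
      push_cast
      ring
    · have hgt : 1 < ‖r‖ := lt_of_le_of_ne (not_lt.mp hlt) (Ne.symm (hne r hr))
      have hgt' : 1 < |r.re| := habs ▸ hgt
      have hre2 : 0 < r.re ^ 2 - 1 := by
        nlinarith [sq_abs r.re, hgt']
      refine ⟨(r.re ^ 2 - 1) * u, by nlinarith, ?_⟩
      rw [← hcons, Multiset.map_cons, Multiset.prod_cons, hprod,
        filter_abs_cons_neg r S' hlt, hfac]
      push_cast
      ring
  · -- nonreal root, pair with conjugate
    have hner : (starRingEnd ℂ) r ≠ r := fun h => him (Complex.conj_eq_iff_im.mp h)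
    have hmem' : (starRingEnd ℂ) r ∈ S.erase r :=
      (Multiset.mem_erase_of_ne hner).mpr hconjmem
    set S'' := (S.erase r).erase ((starRingEnd ℂ) r) with hS''
    have hcons : r ::ₘ (starRingEnd ℂ) r ::ₘ S'' = S := by
      rw [hS'', Multiset.cons_erase hmem', Multiset.cons_erase hr]
    have hconj'' : S''.map (starRingEnd ℂ) = S'' := by
      rw [hS'', Multiset.map_erase _ (starRingEnd ℂ).injective,
        Multiset.map_erase _ (starRingEnd ℂ).injective, hconj,
        Complex.conj_conj, Multiset.erase_comm]
    have hne'' : ∀ x ∈ S'', ‖x‖ ≠ 1 := fun x hx =>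
      hne x (Multiset.mem_of_mem_erase (Multiset.mem_of_mem_erase hx))
    have hlt'' : S'' < S :=
      lt_of_le_of_lt (Multiset.erase_le _ _) (Multiset.erase_lt.mpr hr)
    obtain ⟨u, hu, hprod⟩ := ih S'' hlt'' hconj'' hne''
    have hr2 : r ^ 2 - 1 ≠ 0 := by
      intro h
      apply hne r hr
      have hsq : r ^ 2 = 1 := by linear_combination h
      have h2 : ‖r‖ ^ 2 = 1 ^ 2 := by
        rw [← norm_pow, hsq]; simp
      exact (sq_eq_sq₀ (norm_nonneg r) zero_le_one).mp h2
    have hw : 0 < Complex.normSq (r ^ 2 - 1) := Complex.normSq_pos.mpr hr2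
    have hpair : (r ^ 2 - 1) * ((starRingEnd ℂ) r ^ 2 - 1)
        = ((Complex.normSq (r ^ 2 - 1) : ℝ) : ℂ) := by
      calc (r ^ 2 - 1) * ((starRingEnd ℂ) r ^ 2 - 1)
          = (r ^ 2 - 1) * (starRingEnd ℂ) (r ^ 2 - 1) := by rw [map_sub, map_pow, map_one]
        _ = _ := Complex.mul_conj _
    have habs : ‖(starRingEnd ℂ) r‖ = ‖r‖ := Complex.norm_conj r
    have hcard : ((-1 : ℝ)) ^ (Multiset.card (S.filter (fun z => ‖z‖ < 1)))
        = ((-1 : ℝ)) ^ (Multiset.card (S''.filter (fun z => ‖z‖ < 1))) := by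
      rw [← hcons]
      by_cases hlt : ‖r‖ < 1
      · rw [filter_abs_cons_pos _ _ hlt, filter_abs_cons_pos _ _ (by rwa [habs]),
          Multiset.card_cons, Multiset.card_cons]
        ring
      · rw [filter_abs_cons_neg _ _ hlt, filter_abs_cons_neg _ _ (by rwa [habs])]
    refine ⟨Complex.normSq (r ^ 2 - 1) * u, by positivity, ?_⟩
    rw [← hcons, Multiset.map_cons, Multiset.map_cons, Multiset.prod_cons, Multiset.prod_cons,
      ← mul_assoc, hpair, hprod, hcons, hcard]
    push_cast
    ring

end Aux

/-- Parity of the winding number of a one-dimensional stochastic matrix: with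
`P(X) = ∑ c l * X^(l+l₁)` having no zero on the unit circle and `N₀` zeros in the open
unit disk, one has `(-1)^(N₀ - l₁) = sgn (∑ (-1)^l c l)`, i.e.
`(-1)^{w(T,0)} = sgn ξ(π)`. -/
theorem parity_of_winding (l₁ l₂ : ℕ) (c : ℤ → ℝ)
    (hnn : ∀ l ∈ Finset.Icc (-(l₁ : ℤ)) (l₂ : ℤ), 0 ≤ c l)
    (hsum : ∑ l ∈ Finset.Icc (-(l₁ : ℤ)) (l₂ : ℤ), c l = 1)
    (hcirc : ∀ z : ℂ, ‖z‖ = 1 →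
      Polynomial.eval z (∑ l ∈ Finset.Icc (-(l₁ : ℤ)) (l₂ : ℤ),
        Polynomial.C ((c l : ℂ)) * Polynomial.X ^ (l + l₁).toNat) ≠ 0) :
    ((-1 : ℝ)) ^ ((Multiset.card ((∑ l ∈ Finset.Icc (-(l₁ : ℤ)) (l₂ : ℤ),
        Polynomial.C ((c l : ℂ)) * Polynomial.X ^ (l + l₁).toNat).roots.filter
          (fun z => ‖z‖ < 1)) : ℤ) - (l₁ : ℤ))
      = Real.sign (∑ l ∈ Finset.Icc (-(l₁ : ℤ)) (l₂ : ℤ), (-1 : ℝ) ^ l * c l) := by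
  set q : Polynomial ℝ := ∑ l ∈ Finset.Icc (-(l₁ : ℤ)) (l₂ : ℤ),
      Polynomial.C (c l) * Polynomial.X ^ (l + l₁).toNat with hq
  have hpq : (∑ l ∈ Finset.Icc (-(l₁ : ℤ)) (l₂ : ℤ),
      Polynomial.C ((c l : ℂ)) * Polynomial.X ^ (l + l₁).toNat) = q.map (algebraMap ℝ ℂ) := by
    rw [hq, Polynomial.map_sum]
    simp [Polynomial.map_mul, Polynomial.map_pow]
  rw [hpq] at hcirc ⊢
  set p : Polynomial ℂ := q.map (algebraMap ℝ ℂ) with hp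
  -- evaluation facts
  have hq1 : q.eval 1 = 1 := by
    rw [hq, Polynomial.eval_finset_sum]
    simpa using hsum
  have hqne : q ≠ 0 := fun h => by simp [h] at hq1
  have hpr : ∀ x : ℝ, p.eval ((x : ℂ)) = ((q.eval x : ℝ) : ℂ) := by
    intro x
    rw [hp, Polynomial.eval_map]
    have := Polynomial.eval₂_at_apply (p := q) (algebraMap ℝ ℂ) x
    simpa using this
  have hp1 : p.eval 1 = 1 := by
    have := hpr 1
    simpa [hq1] using this
  have hp0 : p ≠ 0 := fun h => by simp [h] at hp1
  have hsplits : p.Splits := IsAlgClosed.splits p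
  -- roots are conjugation-invariant
  have hpc : p.map (starRingEnd ℂ) = p := by
    rw [hp, Polynomial.map_map]
    congr 1
    ext x
    simp [Complex.conj_ofReal]
  have hroots : p.roots.map (starRingEnd ℂ) = p.roots := by
    conv_rhs => rw [← hpc]
    rw [hsplits.roots_map]
  have hne : ∀ r ∈ p.roots, ‖r‖ ≠ 1 := by
    intro r hrr habs1
    exact hcirc r habs1 ((Polynomial.mem_roots hp0).mp hrr)
  -- factorization
  have hfac := hsplits.eq_prod_roots
  have heval : ∀ x : ℂ, p.eval x = p.leadingCoeff * (p.roots.map (fun r => x - r)).prod := by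
    intro x
    conv_lhs => rw [hfac]
    rw [Polynomial.eval_mul, Polynomial.eval_C, Polynomial.eval_multiset_prod,
      Multiset.map_map]
    simp [Function.comp]
  have hlead : p.leadingCoeff = ((q.leadingCoeff : ℝ) : ℂ) := by
    rw [hp, Polynomial.leadingCoeff_map_of_injective (algebraMap ℝ ℂ).injective]
    simp
  have hprod2 : ((q.eval (-1) : ℝ) : ℂ)
      = p.leadingCoeff ^ 2 * ((p.roots.map (fun r => r ^ 2 - 1)).prod) := by
    have h1 : ((q.eval (-1) : ℝ) : ℂ) = p.eval (-1) * p.eval 1 := by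
      rw [hp1, mul_one]
      have := hpr (-1)
      push_cast at this
      rw [this]
    rw [h1, heval (-1), heval 1, mul_mul_mul_comm, ← Multiset.prod_map_mul]
    congr 1
    · ring
    · congr 1
      exact Multiset.map_congr rfl (fun x _ => by ring)
  obtain ⟨u, hu, hperp⟩ := aux_prod p.roots hroots hne
  set N := Multiset.card (p.roots.filter (fun z => ‖z‖ < 1)) with hN
  have hkey : q.eval (-1) = q.leadingCoeff ^ 2 * ((-1) ^ N * u) := by
    have h2 := hprod2
    rw [hperp, hlead] at h2
    exact_mod_cast h2
  have hlne : q.leadingCoeff ≠ 0 := Polynomial.leadingCoeff_ne_zero.mpr hqne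
  have hv : 0 < q.leadingCoeff ^ 2 * u := by positivity
  -- rewrite the sum
  have hsum2 : ∑ l ∈ Finset.Icc (-(l₁ : ℤ)) (l₂ : ℤ), (-1 : ℝ) ^ l * c l
      = (-1 : ℝ) ^ (l₁ : ℕ) * q.eval (-1) := by
    rw [hq, Polynomial.eval_finset_sum, Finset.mul_sum]
    apply Finset.sum_congr rfl
    intro l hl
    simp only [Polynomial.eval_mul, Polynomial.eval_C, Polynomial.eval_pow, Polynomial.eval_X]
    have hl0 : 0 ≤ l + (l₁ : ℤ) := by
      have := (Finset.mem_Icc.mp hl).1; linarith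
    have h1 : ((-1 : ℝ)) ^ ((l + (l₁ : ℤ)).toNat) = (-1 : ℝ) ^ (l + (l₁ : ℤ)) := by
      rw [← zpow_natCast, Int.toNat_of_nonneg hl0]
    rw [h1, zpow_add₀ (by norm_num : (-1 : ℝ) ≠ 0), zpow_natCast]
    have hsq : ((-1 : ℝ) ^ (l₁ : ℕ)) * ((-1 : ℝ) ^ (l₁ : ℕ)) = 1 := by
      rw [← mul_pow]; norm_num
    linear_combination (-(c l * (-1 : ℝ) ^ (l : ℤ))) * hsq
  rw [hsum2, hkey, ← mul_assoc, ← mul_assoc]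
  have harr : (-1 : ℝ) ^ (l₁ : ℕ) * q.leadingCoeff ^ 2 * (-1 : ℝ) ^ N * u
      = (-1 : ℝ) ^ (l₁ + N) * (q.leadingCoeff ^ 2 * u) := by
    rw [pow_add]; ring
  rw [harr]
  rcases Nat.even_or_odd (l₁ + N) with he | ho
  · rw [he.neg_one_pow, one_mul, Real.sign_of_pos hv]
    have heZ : Even ((N : ℤ) - (l₁ : ℤ)) := by
      rw [Int.even_sub]
      simp only [Int.even_coe_nat]
      exact ⟨fun h => ((Nat.even_add).mp he).mpr h, fun h => ((Nat.even_add).mp he).mp h⟩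
    exact heZ.neg_one_zpow
  · rw [ho.neg_one_pow, Real.sign_of_neg (by linarith)]
    have hoZ : Odd ((N : ℤ) - (l₁ : ℤ)) := by
      have h1 : Odd ((l₁ + N : ℕ) : ℤ) := by exact_mod_cast ho
      have h2 : ((N : ℤ) - (l₁ : ℤ)) = ((l₁ + N : ℕ) : ℤ) - 2 * l₁ := by push_cast; ring
      rw [h2]
      rcases h1 with ⟨k, hk⟩
      exact ⟨k - l₁, by omega⟩
    exact hoZ.neg_one_zpow
end

section
/- (Nontrivial winding of the asymmetric random walk, leftward case) Let p_R, p_L, p_0 be nonnegative reals with p_R + p_L + p_0 = 1, p_L > p_R, and p_L + p_R > 1/2. Then every complex root z of the quadratic polynomial q(X) = p_L X² + p_0 X + p_R satisfies |z| < 1. (Since q(z) = z·ξ(z) where ξ is the Bloch symbol, this means the winding number of the walk around the origin equals +1 = sgn(p_L − p_R).) -/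
open Polynomial

/-- Leftward asymmetric random walk: if `p_L > p_R` and `p_L + p_R > 1/2`, every complex
root of `q(X) = p_L X² + p_0 X + p_R` lies strictly inside the unit disk, so the winding
number of the walk around the origin equals `+1`. -/
theorem asymmetric_walk_winding_left (pR pL p0 : ℝ)
    (hR : 0 ≤ pR) (hL : 0 ≤ pL) (h0 : 0 ≤ p0)
    (hsum : pR + pL + p0 = 1) (hLR : pR < pL) (hhalf : 1 / 2 < pL + pR)
    (z : ℂ)
    (hz : Polynomial.eval z (Polynomial.C (pL : ℂ) * Polynomial.X ^ 2
      + Polynomial.C (p0 : ℂ) * Polynomial.X + Polynomial.C (pR : ℂ)) = 0) :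
    ‖z‖ < 1 := by
  have hL' : 0 < pL := lt_of_le_of_lt hR hLR
  simp only [Polynomial.eval_add, Polynomial.eval_mul, Polynomial.eval_pow,
    Polynomial.eval_C, Polynomial.eval_X] at hz
  by_cases him : z.im = 0
  · -- real case
    have hzx : z = (z.re : ℂ) := by
      apply Complex.ext <;> simp [him]
    set x := z.re with hx
    rw [hzx] at hz
    have heq : pL * x ^ 2 + p0 * x + pR = 0 := by
      exact_mod_cast hz
    rw [hzx, Complex.norm_real, Real.norm_eq_abs]
    by_contra hcon
    push_neg at hcon
    rcases le_abs.mp hcon with hx1 | hx1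
    · nlinarith
    · -- x ≤ -1
      have h1 : (0:ℝ) ≤ -1 - x := by linarith
      have h2 : (0:ℝ) ≤ -(pL * x) - pR := by nlinarith
      have h3 : (0:ℝ) ≤ pL + pR - p0 := by linarith
      nlinarith [mul_nonneg h1 h2, mul_nonneg h1 h3]
  · -- nonreal case: conjugate is also a root
    have hzc : (pL : ℂ) * (starRingEnd ℂ z) ^ 2 + (p0 : ℂ) * (starRingEnd ℂ z)
        + (pR : ℂ) = 0 := by
      have := congrArg (starRingEnd ℂ) hz
      simpa using this
    set w := starRingEnd ℂ z with hw
    have hne : z - w ≠ 0 := by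
      rw [sub_ne_zero, hw]
      intro h
      exact him ((Complex.conj_eq_iff_im.mp h.symm))
    have hsum2 : (pL : ℂ) * (z + w) + p0 = 0 := by
      have hdiff : (z - w) * ((pL : ℂ) * (z + w) + p0) = 0 := by
        linear_combination hz - hzc
      rcases mul_eq_zero.mp hdiff with h | h
      · exact absurd h hne
      · exact h
    have hprod : (pL : ℂ) * (z * w) = pR := by
      linear_combination z * hsum2 - hz
    have hns : pL * Complex.normSq z = pR := by
      have : ((pL * Complex.normSq z : ℝ) : ℂ) = ((pR : ℝ) : ℂ) := by
        push_cast
        rw [← Complex.mul_conj]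
        exact hprod
      exact_mod_cast this
    have hsq : ‖z‖ ^ 2 < 1 := by
      rw [Complex.sq_norm]
      nlinarith
    nlinarith [norm_nonneg z]
end

section
/- (Nontrivial winding of the asymmetric random walk, rightward case) Let p_R, p_L, p_0 be nonnegative reals with p_R + p_L + p_0 = 1, p_R > p_L, and p_L + p_R > 1/2. Then every complex root z of the polynomial q(X) = p_L X² + p_0 X + p_R satisfies |z| > 1. (Hence the winding number of the walk around the origin equals −1 = sgn(p_L − p_R).) -/
open Polynomial

/-- Rightward asymmetric random walk: if `p_R > p_L` and `p_L + p_R > 1/2`, every complex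
root of `q(X) = p_L X² + p_0 X + p_R` lies strictly outside the unit disk, so the winding
number of the walk around the origin equals `-1`. -/
theorem asymmetric_walk_winding_right (pR pL p0 : ℝ)
    (hR : 0 ≤ pR) (hL : 0 ≤ pL) (h0 : 0 ≤ p0)
    (hsum : pR + pL + p0 = 1) (hLR : pL < pR) (hhalf : 1 / 2 < pL + pR)
    (z : ℂ)
    (hz : Polynomial.eval z (Polynomial.C (pL : ℂ) * Polynomial.X ^ 2
      + Polynomial.C (p0 : ℂ) * Polynomial.X + Polynomial.C (pR : ℂ)) = 0) :
    1 < ‖z‖ := by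
  simp only [eval_add, eval_mul, eval_C, eval_pow, eval_X] at hz
  by_contra habs
  push_neg at habs
  have hsq : z.re ^ 2 + z.im ^ 2 ≤ 1 := by
    have h2 := Complex.sq_norm z
    have h1 : ‖z‖ ^ 2 ≤ 1 := by nlinarith [norm_nonneg z]
    rw [h2, Complex.normSq_apply] at h1
    nlinarith [h1]
  set x := z.re with hx
  set y := z.im with hy
  have hre : pL * (x ^ 2 - y ^ 2) + p0 * x + pR = 0 := by
    have := congrArg Complex.re hz
    simp [pow_two, Complex.add_re, Complex.mul_re, Complex.mul_im, Complex.ofReal_re,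
      Complex.ofReal_im] at this
    ring_nf at this ⊢
    linarith [this]
  have him : y * (2 * pL * x + p0) = 0 := by
    have := congrArg Complex.im hz
    simp [pow_two, Complex.add_im, Complex.mul_re, Complex.mul_im, Complex.ofReal_re,
      Complex.ofReal_im] at this
    ring_nf at this ⊢
    linarith [this]
  rcases mul_eq_zero.mp him with hy0 | hlin
  · -- real root case
    rw [hy0] at hre hsq
    have hx1 : -1 ≤ x := by nlinarith [sq_nonneg (x + 1)]
    have hxneg : x < 0 := by nlinarith
    nlinarith [mul_nonneg (by linarith : (0:ℝ) ≤ 1 + x)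
      (by nlinarith : (0:ℝ) ≤ pR + pL * x)]
  · -- complex case: 2 pL x + p0 = 0
    have hkey : pL * (x ^ 2 + y ^ 2) = pR := by linear_combination -hre + x * hlin
    nlinarith
end

section
/- (Trivial phase of the asymmetric random walk) Let p_R, p_L, p_0 be nonnegative reals with p_R + p_L + p_0 = 1, p_R > 0, p_L > 0, and p_L + p_R < 1/2. Then the quadratic q(X) = p_L X² + p_0 X + p_R has no complex root on the unit circle |z| = 1, and exactly one complex root (with multiplicity) in the open unit disk |z| < 1. (Hence the winding number of the walk around the origin vanishes.) -/
open Polynomial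

/-- Trivial phase of the asymmetric random walk: if `p_R, p_L > 0` and `p_L + p_R < 1/2`,
then `q(X) = p_L X² + p_0 X + p_R` has no root on the unit circle and exactly one root
(with multiplicity) in the open unit disk, so the winding number around the origin
vanishes. -/
theorem asymmetric_walk_trivial_phase (pR pL p0 : ℝ)
    (hR : 0 < pR) (hL : 0 < pL) (h0 : 0 ≤ p0)
    (hsum : pR + pL + p0 = 1) (hhalf : pL + pR < 1 / 2) :
    (∀ z : ℂ, ‖z‖ = 1 →
      Polynomial.eval z (Polynomial.C (pL : ℂ) * Polynomial.X ^ 2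
        + Polynomial.C (p0 : ℂ) * Polynomial.X + Polynomial.C (pR : ℂ)) ≠ 0) ∧
    Multiset.card ((Polynomial.C (pL : ℂ) * Polynomial.X ^ 2
        + Polynomial.C (p0 : ℂ) * Polynomial.X + Polynomial.C (pR : ℂ)).roots.filter
          (fun z => ‖z‖ < 1)) = 1 := by
  have hp0 : (1:ℝ)/2 < p0 := by linarith
  have hDpos : 0 < p0^2 - 4*pL*pR := by
    nlinarith [sq_nonneg (pL - pR), mul_pos (show 0 < p0 - (pL+pR) by linarith)
      (show 0 < p0 + (pL+pR) by linarith)]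
  set d : ℝ := Real.sqrt (p0^2 - 4*pL*pR) with hd
  have hdpos : 0 < d := Real.sqrt_pos.mpr hDpos
  have hd2 : d^2 = p0^2 - 4*pL*pR := Real.sq_sqrt hDpos.le
  have hkey : |p0 - 2*pL| < d := by
    have h1 : |p0 - 2*pL|^2 < d^2 := by
      rw [sq_abs, hd2]; nlinarith
    exact lt_of_pow_lt_pow_left₀ 2 hdpos.le h1
  have hkey1 : p0 - 2*pL < d := lt_of_le_of_lt (le_abs_self _) hkey
  have hkey2 : 2*pL - p0 < d := by
    have := abs_lt.mp hkey
    linarith [this.1]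
  have hdlt : d < p0 := by
    have : d^2 < p0^2 := by rw [hd2]; nlinarith
    nlinarith
  obtain ⟨r1, hr1⟩ : ∃ r : ℝ, r = (-p0 + d)/(2*pL) := ⟨_, rfl⟩
  obtain ⟨r2, hr2⟩ : ∃ r : ℝ, r = (-p0 - d)/(2*pL) := ⟨_, rfl⟩
  have hpLne : pL ≠ 0 := hL.ne'
  have hsumr : pL * (r1 + r2) = -p0 := by
    rw [hr1, hr2]; field_simp; ring
  have hprodr : pL * (r1 * r2) = pR := by
    rw [hr1, hr2]; field_simp; nlinarith [hd2]
  have hpLc : (pL:ℂ) ≠ 0 := by exact_mod_cast hpLne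
  have hfact : Polynomial.C (pL : ℂ) * Polynomial.X ^ 2
        + Polynomial.C (p0 : ℂ) * Polynomial.X + Polynomial.C (pR : ℂ)
      = Polynomial.C (pL : ℂ) * ((X - C (r1:ℂ)) * (X - C (r2:ℂ))) := by
    have h1 : (pL:ℂ) * ((r1:ℂ) + (r2:ℂ)) = -(p0:ℂ) := by exact_mod_cast hsumr
    have h2 : (pL:ℂ) * ((r1:ℂ) * (r2:ℂ)) = (pR:ℂ) := by exact_mod_cast hprodr
    have e1 : (p0:ℂ) = -((pL:ℂ) * ((r1:ℂ) + (r2:ℂ))) := by rw [h1]; ring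
    have e2 : (pR:ℂ) = (pL:ℂ) * ((r1:ℂ) * (r2:ℂ)) := h2.symm
    rw [e1, e2]
    push_cast
    simp only [map_mul, map_neg, map_sub, map_add]
    ring
  -- absolute value facts
  have h2pL : (0:ℝ) < 2*pL := by linarith
  have hr1neg : r1 < 0 := by
    rw [hr1]; apply div_neg_of_neg_of_pos <;> linarith
  have h1a : -1 < r1 := by
    rw [hr1, lt_div_iff₀ h2pL]; linarith
  have habs1 : |r1| < 1 := abs_lt.mpr ⟨h1a, by linarith⟩
  have h2a : r2 < -1 := by
    rw [hr2, div_lt_iff₀ h2pL]; linarith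
  have habs2 : 1 < |r2| := by
    rw [abs_of_neg (by linarith : r2 < 0)]; linarith
  have habs1c : ‖((r1:ℝ):ℂ)‖ < 1 := by rw [Complex.norm_real, Real.norm_eq_abs]; exact habs1
  have habs2c : ¬ ‖((r2:ℝ):ℂ)‖ < 1 := by
    rw [Complex.norm_real, Real.norm_eq_abs]; exact not_lt.mpr habs2.le
  constructor
  · intro z hz hzero
    rw [hfact] at hzero
    simp only [eval_mul, eval_sub, eval_X, eval_C, mul_eq_zero] at hzero
    rcases hzero with h | h
    · exact hpLc h
    rcases h with h | h
    · have : z = (r1:ℂ) := by linear_combination h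
      rw [this] at hz
      rw [Complex.norm_real, Real.norm_eq_abs] at hz
      linarith [hz ▸ habs1]
    · have : z = (r2:ℂ) := by linear_combination h
      rw [this] at hz
      rw [Complex.norm_real, Real.norm_eq_abs] at hz
      linarith [hz ▸ habs2]
  · rw [hfact]
    rw [Polynomial.roots_C_mul _ hpLc,
      Polynomial.roots_mul (by
        apply mul_ne_zero <;> exact X_sub_C_ne_zero _),
      Polynomial.roots_X_sub_C, Polynomial.roots_X_sub_C]
    simp only [Multiset.filter_add, Multiset.filter_singleton]
    rw [if_pos habs1c, if_neg habs2c]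
    simp
end

section
/- (Homotopy invariance of the zero count in the disk) Let n be a positive integer and let c : ℝ → ℂ^{n+1} be continuous, and for each s define the polynomial p_s(X) = \sum_{i=0}^{n} c_i(s) X^i. Assume that for every s ∈ [0,1] the leading coefficient c_n(s) is nonzero and that p_s has no zero on the unit circle |z| = 1. Then the number of zeros of p_0 in the open unit disk |z| < 1, counted with multiplicity, equals the number of zeros of p_1 in the open unit disk, counted with multiplicity. -/
open Finset Polynomial Filter Topology NNReal

namespace ZDH

noncomputable def P {n : ℕ} (c : Fin (n+1) → ℂ) : Polynomial ℂ :=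
  ∑ i : Fin (n + 1), Polynomial.C (c i) * Polynomial.X ^ (i : ℕ)

lemma eval_P {n : ℕ} (c : Fin (n+1) → ℂ) (z : ℂ) :
    (P c).eval z = ∑ i : Fin (n+1), c i * z ^ (i:ℕ) := by
  simp [P, Polynomial.eval_finset_sum]

lemma coeff_P {n : ℕ} (c : Fin (n+1) → ℂ) (j : Fin (n+1)) : (P c).coeff j = c j := by
  simp only [P, Polynomial.finset_sum_coeff, Polynomial.coeff_C_mul, Polynomial.coeff_X_pow]
  rw [Finset.sum_eq_single j]
  · simp
  · intro b _ hb
    rw [if_neg, mul_zero]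
    intro h
    exact hb (by ext; simp [← h])
  · simp

lemma coeff_P_last {n : ℕ} (c : Fin (n+1) → ℂ) : (P c).coeff n = c (Fin.last n) := by
  have := coeff_P c (Fin.last n)
  simpa [Fin.last] using this

lemma natDegree_P_le {n : ℕ} (c : Fin (n+1) → ℂ) : (P c).natDegree ≤ n := by
  apply Polynomial.natDegree_sum_le_of_forall_le
  intro i _
  refine (Polynomial.natDegree_C_mul_le _ _).trans ?_
  simpa using Nat.lt_succ_iff.mp i.isLt

lemma natDegree_P {n : ℕ} {c : Fin (n+1) → ℂ} (h : c (Fin.last n) ≠ 0) :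
    (P c).natDegree = n :=
  le_antisymm (natDegree_P_le c)
    (Polynomial.le_natDegree_of_ne_zero (by rw [coeff_P_last]; exact h))

lemma leadingCoeff_P {n : ℕ} {c : Fin (n+1) → ℂ} (h : c (Fin.last n) ≠ 0) :
    (P c).leadingCoeff = c (Fin.last n) := by
  rw [Polynomial.leadingCoeff, natDegree_P h, coeff_P_last]

lemma card_roots_P {n : ℕ} {c : Fin (n+1) → ℂ} (h : c (Fin.last n) ≠ 0) :
    Multiset.card (P c).roots = n := by
  have := Polynomial.splits_iff_card_roots.mp
    (IsAlgClosed.splits (k := ℂ) (P c))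
  rw [this, natDegree_P h]

lemma exists_vec {n : ℕ} (m : Multiset ℂ) (h : Multiset.card m = n) :
    ∃ v : Fin n → ℂ, m = ↑(List.ofFn v) := by
  obtain ⟨l, rfl⟩ := m.exists_rep
  have h' : l.length = n := by simpa using h
  subst h'
  exact ⟨l.get, by simp [List.ofFn_get]⟩

lemma P_eq_prod {n : ℕ} {c : Fin (n+1) → ℂ} (h : c (Fin.last n) ≠ 0)
    {v : Fin n → ℂ} (hv : (P c).roots = ↑(List.ofFn v)) :
    P c = Polynomial.C (c (Fin.last n)) *
      (((List.ofFn v : Multiset ℂ)).map (fun a => Polynomial.X - Polynomial.C a)).prod := by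
  conv_lhs => rw [← Polynomial.C_leadingCoeff_mul_prod_multiset_X_sub_C
    (p := P c) (by rw [card_roots_P h, natDegree_P h])]
  rw [leadingCoeff_P h, hv]

lemma eval_prod_ofFn {n : ℕ} (v : Fin n → ℂ) (z : ℂ) :
    Polynomial.eval z (((List.ofFn v : Multiset ℂ)).map
        (fun a => Polynomial.X - Polynomial.C a)).prod = ∏ i, (z - v i) := by
  simp [Polynomial.eval_multiset_prod, Multiset.map_map, Function.comp_def, List.ofFn_eq_map,
    Multiset.map_coe, Multiset.prod_coe, Fin.prod_univ_def, Polynomial.eval_list_prod,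
    List.map_map]

lemma card_filter_ofFn {n : ℕ} (v : Fin n → ℂ) :
    Multiset.card (Multiset.filter (fun z : ℂ => ‖z‖ < 1) ↑(List.ofFn v))
      = (Finset.univ.filter (fun i => ‖v i‖ < 1)).card := by
  classical
  rw [List.ofFn_eq_map, ← Multiset.map_coe, Multiset.filter_map, Multiset.card_map]
  rw [show ((Finset.univ : Finset (Fin n)).filter (fun i => ‖v i‖ < 1)).card
      = Multiset.card (Multiset.filter (fun i => ‖v i‖ < 1)
          (Finset.univ : Finset (Fin n)).val) from rfl]
  congr 1

noncomputable def N {n : ℕ} (c : Fin (n+1) → ℂ) : ℕ :=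
  Multiset.card ((P c).roots.filter (fun z => ‖z‖ < 1))

lemma key {n : ℕ} {c : ℝ → Fin (n + 1) → ℂ} (hc : Continuous c)
    (hlead : ∀ s ∈ Set.Icc (0 : ℝ) 1, c s (Fin.last n) ≠ 0)
    (hcirc : ∀ s ∈ Set.Icc (0 : ℝ) 1, ∀ z : ℂ, ‖z‖ = 1 → (P (c s)).eval z ≠ 0)
    {x : ℝ} (hx : x ∈ Set.Icc (0:ℝ) 1)
    {t : ℕ → ℝ} (ht : ∀ k, t k ∈ Set.Icc (0:ℝ) 1)
    (htx : Tendsto t atTop (𝓝 x)) :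
    ∃ ms : ℕ → ℕ, ∀ᶠ k in atTop, N (c (t (ms k))) = N (c x) := by
  have hx0 : c x (Fin.last n) ≠ 0 := hlead x hx
  -- root vectors
  have hvec : ∀ k, ∃ v : Fin n → ℂ, (P (c (t k))).roots = ↑(List.ofFn v) := fun k =>
    exists_vec _ (card_roots_P (hlead _ (ht k)))
  choose v hv using hvec
  have hroot : ∀ k i, (P (c (t k))).IsRoot (v k i) := by
    intro k i
    apply Polynomial.isRoot_of_mem_roots
    rw [hv k]
    exact Multiset.mem_coe.mpr (List.mem_ofFn.mpr ⟨i, rfl⟩)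
  have hct : Tendsto (fun k => c (t k)) atTop (𝓝 (c x)) := (hc.tendsto x).comp htx
  -- eventual uniform bound on the roots
  set δ : ℝ≥0 := ‖c x (Fin.last n)‖₊ / 2 with hδdef
  have hδ : 0 < δ := by
    rw [hδdef]
    exact div_pos (by simpa using hx0) two_pos
  set M : ℝ≥0 := (Finset.univ.sup (fun i : Fin (n+1) => ‖c x i‖₊)) + 1 with hMdef
  set R : ℝ≥0 := M / δ + 1 with hRdef
  have hbound : ∀ᶠ k in atTop, ∀ i, ‖v k i‖ ≤ (R : ℝ) := by
    have h1 : ∀ᶠ k in atTop, ∀ i : Fin (n+1), ‖c (t k) i‖₊ ≤ M := by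
      rw [Filter.eventually_all]
      intro i
      have : Tendsto (fun k => ‖c (t k) i‖) atTop (𝓝 ‖c x i‖) :=
        ((continuous_apply i).comp hc).norm.continuousAt.tendsto.comp htx
      have hlt : ‖c x i‖ < (M : ℝ) := by
        have : ‖c x i‖₊ ≤ Finset.univ.sup (fun i : Fin (n+1) => ‖c x i‖₊) :=
          Finset.le_sup (f := fun i : Fin (n+1) => ‖c x i‖₊) (Finset.mem_univ i)
        calc ‖c x i‖ = (‖c x i‖₊ : ℝ) := rfl
          _ ≤ ((Finset.univ.sup (fun i : Fin (n+1) => ‖c x i‖₊) : ℝ≥0) : ℝ) := by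
              exact_mod_cast this
          _ < (M : ℝ) := by rw [hMdef]; push_cast; linarith
      filter_upwards [this.eventually_lt_const hlt] with k hk
      have : ‖c (t k) i‖ ≤ (M : ℝ) := hk.le
      exact_mod_cast this
    have h2 : ∀ᶠ k in atTop, δ ≤ ‖c (t k) (Fin.last n)‖₊ := by
      have : Tendsto (fun k => ‖c (t k) (Fin.last n)‖) atTop (𝓝 ‖c x (Fin.last n)‖) :=
        ((continuous_apply (Fin.last n)).comp hc).norm.continuousAt.tendsto.comp htx
      have hlt : (δ : ℝ) < ‖c x (Fin.last n)‖ := by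
        rw [hδdef]
        push_cast
        have : 0 < ‖c x (Fin.last n)‖ := norm_pos_iff.mpr hx0
        linarith
      filter_upwards [this.eventually_const_lt hlt] with k hk
      exact_mod_cast hk.le
    filter_upwards [h1, h2] with k hk1 hk2
    intro i
    have hcb : ‖v k i‖₊ < Polynomial.cauchyBound (P (c (t k))) := by
      refine Polynomial.IsRoot.norm_lt_cauchyBound ?_ (hroot k i)
      intro h0
      exact hlead _ (ht k) (by rw [← coeff_P (c (t k)) (Fin.last n), h0]; simp)
    have hsup : (Finset.range (P (c (t k))).natDegree).sup
        (fun x => ‖(P (c (t k))).coeff x‖₊) ≤ M := by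
      apply Finset.sup_le
      intro j hj
      rw [Finset.mem_range, natDegree_P (hlead _ (ht k))] at hj
      have : (P (c (t k))).coeff j = c (t k) ⟨j, by omega⟩ :=
        coeff_P (c (t k)) ⟨j, by omega⟩
      rw [this]
      exact hk1 _
    have hld : δ ≤ ‖(P (c (t k))).leadingCoeff‖₊ := by
      rw [leadingCoeff_P (hlead _ (ht k))]
      exact hk2
    have hcb2 : Polynomial.cauchyBound (P (c (t k))) ≤ R := by
      rw [Polynomial.cauchyBound, hRdef]
      gcongr
    have := (hcb.trans_le hcb2).le
    calc ‖v k i‖ = ((‖v k i‖₊ : ℝ≥0) : ℝ) := rfl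
      _ ≤ (R : ℝ) := by exact_mod_cast this
  obtain ⟨K, hK⟩ := eventually_atTop.mp hbound
  -- compactness: extract convergent subsequence of root vectors
  have hmem : ∀ k, v (k + K) ∈ Metric.closedBall (0 : Fin n → ℂ) (R : ℝ) := by
    intro k
    rw [mem_closedBall_zero_iff, pi_norm_le_iff_of_nonneg (by positivity)]
    intro i
    exact hK (k + K) (Nat.le_add_left K k) i
  obtain ⟨w, -, φ, hφ, hw⟩ :=
    (isCompact_closedBall (0 : Fin n → ℂ) (R : ℝ)).tendsto_subseq hmem
  set ms : ℕ → ℕ := fun k => φ k + K with hmsdef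
  have hms : Tendsto ms atTop atTop :=
    (tendsto_add_atTop_nat K).comp hφ.tendsto_atTop
  have hts : Tendsto (fun k => t (ms k)) atTop (𝓝 x) := htx.comp hms
  have cconv : Tendsto (fun k => c (t (ms k))) atTop (𝓝 (c x)) := (hc.tendsto x).comp hts
  have vconv : Tendsto (fun k => v (ms k)) atTop (𝓝 w) := hw
  have vconv' : ∀ i : Fin n, Tendsto (fun k => v (ms k) i) atTop (𝓝 (w i)) := fun i =>
    ((continuous_apply i).tendsto w).comp vconv
  -- the limit polynomial factors through w
  have heval : ∀ z : ℂ, (P (c x)).eval z = (c x (Fin.last n)) * ∏ i, (z - w i) := by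
    intro z
    have h1 : Tendsto (fun k => (P (c (t (ms k)))).eval z) atTop (𝓝 ((P (c x)).eval z)) := by
      simp only [eval_P]
      apply tendsto_finset_sum
      intro i _
      exact (((continuous_apply i).tendsto (c x)).comp cconv).mul_const _
    have h2 : (fun k => (P (c (t (ms k)))).eval z)
        = fun k => c (t (ms k)) (Fin.last n) * ∏ i, (z - v (ms k) i) := by
      funext k
      rw [P_eq_prod (hlead _ (ht (ms k))) (hv (ms k))]
      rw [Polynomial.eval_mul, Polynomial.eval_C, eval_prod_ofFn]
    have h3 : Tendsto (fun k => c (t (ms k)) (Fin.last n) * ∏ i, (z - v (ms k) i)) atTop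
        (𝓝 ((c x (Fin.last n)) * ∏ i, (z - w i))) := by
      refine Tendsto.mul (((continuous_apply (Fin.last n)).tendsto (c x)).comp cconv) ?_
      apply tendsto_finset_prod
      intro i _
      exact tendsto_const_nhds.sub (vconv' i)
    rw [h2] at h1
    exact tendsto_nhds_unique h1 h3
  have hfact : P (c x) = Polynomial.C (c x (Fin.last n)) *
      (((List.ofFn w : Multiset ℂ)).map (fun a => Polynomial.X - Polynomial.C a)).prod := by
    apply Polynomial.funext
    intro z
    rw [heval z, Polynomial.eval_mul, Polynomial.eval_C, eval_prod_ofFn]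
  have hrootsx : (P (c x)).roots = ↑(List.ofFn w) := by
    rw [hfact, Polynomial.roots_C_mul _ hx0, Polynomial.roots_multiset_prod_X_sub_C]
  -- w has no coordinate on the unit circle
  have hwcirc : ∀ i, ‖w i‖ ≠ 1 := by
    intro i h1
    apply hcirc x hx (w i) h1
    apply Polynomial.isRoot_of_mem_roots
    rw [hrootsx]
    exact Multiset.mem_coe.mpr (List.mem_ofFn.mpr ⟨i, rfl⟩)
  -- eventually the root vectors are on the same side of the circle as w
  have hside : ∀ᶠ k in atTop, ∀ i : Fin n,
      (‖v (ms k) i‖ < 1 ↔ ‖w i‖ < 1) := by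
    rw [Filter.eventually_all]
    intro i
    have habs : Tendsto (fun k => ‖v (ms k) i‖) atTop (𝓝 (‖w i‖)) :=
      (continuous_norm.tendsto _).comp (vconv' i)
    rcases lt_or_gt_of_ne (hwcirc i) with h | h
    · filter_upwards [habs.eventually_lt_const h] with k hk
      simp [hk, h]
    · filter_upwards [habs.eventually_const_lt h] with k hk
      constructor
      · intro h'; linarith
      · intro h'; linarith
  refine ⟨ms, ?_⟩
  filter_upwards [hside] with k hk
  classical
  have hNk : N (c (t (ms k))) =
      (Finset.univ.filter (fun i => ‖v (ms k) i‖ < 1)).card := by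
    rw [N, hv (ms k), card_filter_ofFn]
  have hNx : N (c x) = (Finset.univ.filter (fun i => ‖w i‖ < 1)).card := by
    rw [N, hrootsx, card_filter_ofFn]
  rw [hNk, hNx]
  congr 1
  exact Finset.filter_congr (fun i _ => hk i)


end ZDH

/-- Homotopy invariance of the number of zeros in the open unit disk: for a continuous
family of degree-`n` complex polynomials whose leading coefficient never vanishes and
which have no zero on the unit circle throughout `s ∈ [0,1]`, the number of zeros in the
open unit disk (with multiplicity) at `s = 0` equals that at `s = 1`. -/
theorem zeros_in_disk_homotopy_invariant (n : ℕ) (hn : 0 < n)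
    (c : ℝ → Fin (n + 1) → ℂ) (hc : Continuous c)
    (hlead : ∀ s ∈ Set.Icc (0 : ℝ) 1, c s (Fin.last n) ≠ 0)
    (hcirc : ∀ s ∈ Set.Icc (0 : ℝ) 1, ∀ z : ℂ, ‖z‖ = 1 →
      Polynomial.eval z (∑ i : Fin (n + 1),
        Polynomial.C (c s i) * Polynomial.X ^ (i : ℕ)) ≠ 0) :
    Multiset.card ((∑ i : Fin (n + 1),
        Polynomial.C (c 0 i) * Polynomial.X ^ (i : ℕ)).roots.filter
          (fun z => ‖z‖ < 1))
      = Multiset.card ((∑ i : Fin (n + 1),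
        Polynomial.C (c 1 i) * Polynomial.X ^ (i : ℕ)).roots.filter
          (fun z => ‖z‖ < 1)) := by
  have hcirc' : ∀ s ∈ Set.Icc (0 : ℝ) 1, ∀ z : ℂ, ‖z‖ = 1 →
      (ZDH.P (c s)).eval z ≠ 0 := hcirc
  haveI : PreconnectedSpace (Set.Icc (0:ℝ) 1) := Subtype.preconnectedSpace isPreconnected_Icc
  set F : Set.Icc (0:ℝ) 1 → ℕ := fun s => ZDH.N (c s) with hFdef
  have hF : Continuous F := by
    rw [continuous_iff_seqContinuous]
    intro u x hux
    apply tendsto_of_subseq_tendsto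
    intro ns hns
    have h1 : Tendsto (fun k => ((u (ns k) : ℝ))) atTop (𝓝 (x:ℝ)) :=
      (continuous_subtype_val.tendsto x).comp (hux.comp hns)
    obtain ⟨ms, hms⟩ := ZDH.key hc hlead hcirc' x.2 (fun k => (u (ns k)).2) h1
    refine ⟨ms, ?_⟩
    have h2 : ∀ᶠ k in atTop, ((fun k => F (u (ns k))) ∘ ms) k = F x := hms
    exact Tendsto.congr' (h2.mono fun k hk => hk.symm) tendsto_const_nhds
  have hlc : IsLocallyConstant F := (IsLocallyConstant.iff_continuous F).mpr hF
  have h01 := hlc.apply_eq_of_preconnectedSpace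
    ⟨(0:ℝ), by norm_num⟩ ⟨(1:ℝ), by norm_num⟩
  exact h01
end

section
/- (Exceptional point of the measured channel) Let σ_x = [[0,1],[1,0]], U = exp(−i(π/4)σ_x), and let M be the ℂ-linear map on 2×2 complex matrices defined by M(ρ) = U · D(ρ) · U†, where D(ρ) is the diagonal part of ρ and U† the conjugate transpose. Then the eigenspace of M for eigenvalue 0 (the kernel of M) has dimension 2, while the generalized eigenspace of M for eigenvalue 0 has dimension 3; in particular M is not diagonalizable. -/
open Matrix Polynomial NormedSpace

noncomputable def measuredChannel (U : Matrix (Fin 2) (Fin 2) ℂ) :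
    Matrix (Fin 2) (Fin 2) ℂ →ₗ[ℂ] Matrix (Fin 2) (Fin 2) ℂ where
  toFun ρ := U * Matrix.diagonal (fun i => ρ i i) * Uᴴ
  map_add' x y := by
    show U * Matrix.diagonal (fun i => (x + y) i i) * Uᴴ
        = U * Matrix.diagonal (fun i => x i i) * Uᴴ
          + U * Matrix.diagonal (fun i => y i i) * Uᴴ
    have h : Matrix.diagonal (fun i => (x + y) i i)
        = Matrix.diagonal (fun i => x i i) + Matrix.diagonal (fun i => y i i) := by
      rw [Matrix.diagonal_add]
      rfl
    rw [h, Matrix.mul_add, Matrix.add_mul]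
  map_smul' c x := by
    show U * Matrix.diagonal (fun i => (c • x) i i) * Uᴴ
        = c • (U * Matrix.diagonal (fun i => x i i) * Uᴴ)
    have h : Matrix.diagonal (fun i => (c • x) i i)
        = c • Matrix.diagonal (fun i => x i i) := by
      rw [← Matrix.diagonal_smul]
      rfl
    rw [h, Matrix.mul_smul, Matrix.smul_mul]

namespace EPaux

noncomputable def s : ℂ := Complex.exp (-(Complex.I) * ((Real.pi : ℂ) / 4))
noncomputable def t : ℂ := Complex.exp (Complex.I * ((Real.pi : ℂ) / 4))

lemma hst : s * t = 1 := by
  rw [s, t, ← Complex.exp_add]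
  have : -(Complex.I) * ((Real.pi : ℂ) / 4) + Complex.I * ((Real.pi : ℂ) / 4) = 0 := by ring
  rw [this, Complex.exp_zero]

lemma exp_real_mul_I (x : ℝ) :
    Complex.exp ((x : ℂ) * Complex.I) = (Real.cos x : ℂ) + (Real.sin x : ℂ) * Complex.I := by
  rw [Complex.exp_mul_I, Complex.ofReal_cos, Complex.ofReal_sin]

lemma hs2 : s ^ 2 = -Complex.I := by
  have h : -(Complex.I) * ((Real.pi : ℂ) / 4) + -(Complex.I) * ((Real.pi : ℂ) / 4)
      = ((-(Real.pi / 2) : ℝ) : ℂ) * Complex.I := by push_cast; ring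
  rw [pow_two, s, ← Complex.exp_add, h, exp_real_mul_I]
  simp

lemma ht2 : t ^ 2 = Complex.I := by
  have h : Complex.I * ((Real.pi : ℂ) / 4) + Complex.I * ((Real.pi : ℂ) / 4)
      = (((Real.pi / 2) : ℝ) : ℂ) * Complex.I := by push_cast; ring
  rw [pow_two, t, ← Complex.exp_add, h, exp_real_mul_I]
  simp

lemma hconj_s : (starRingEnd ℂ) s = t := by
  rw [s, t, ← Complex.exp_conj]
  congr 1
  simp [map_ofNat]

lemma hconj_t : (starRingEnd ℂ) t = s := by
  rw [s, t, ← Complex.exp_conj]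
  congr 1
  simp [map_ofNat]

noncomputable def U0 : Matrix (Fin 2) (Fin 2) ℂ :=
  (2⁻¹ : ℂ) • !![s + t, s - t; s - t, s + t]

lemma U0H : U0ᴴ = (2⁻¹ : ℂ) • !![t + s, t - s; t - s, t + s] := by
  rw [U0, Matrix.conjTranspose_smul]
  have h2 : (starRingEnd ℂ) (2⁻¹ : ℂ) = (2⁻¹ : ℂ) := by simp [map_ofNat]
  ext i j
  fin_cases i <;> fin_cases j <;>
    simp [Matrix.conjTranspose_apply, hconj_s, hconj_t, map_sub, map_add]

lemma diag_fin_two (ρ : Matrix (Fin 2) (Fin 2) ℂ) :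
    Matrix.diagonal (fun i => ρ i i) = !![ρ 0 0, 0; 0, ρ 1 1] := by
  ext i j
  fin_cases i <;> fin_cases j <;> simp [Matrix.diagonal]

end EPaux
namespace EPaux

lemma diag2 (a b : ℂ) : Matrix.diagonal ![a, b] = !![a, 0; 0, b] := by
  ext i j
  fin_cases i <;> fin_cases j <;> simp [Matrix.diagonal]

lemma Hmul : (!![1, 1; 1, -1] : Matrix (Fin 2) (Fin 2) ℂ) * ((2⁻¹ : ℂ) • !![1, 1; 1, -1]) = 1 := by
  rw [Matrix.mul_smul, Matrix.mul_fin_two]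
  ext i j
  fin_cases i <;> fin_cases j <;> norm_num [Matrix.one_apply]

lemma Hmul' : ((2⁻¹ : ℂ) • !![1, 1; 1, -1]) * (!![1, 1; 1, -1] : Matrix (Fin 2) (Fin 2) ℂ) = 1 := by
  rw [Matrix.smul_mul, Matrix.mul_fin_two]
  ext i j
  fin_cases i <;> fin_cases j <;> norm_num [Matrix.one_apply]

noncomputable def Hu : (Matrix (Fin 2) (Fin 2) ℂ)ˣ :=
  ⟨!![1, 1; 1, -1], (2⁻¹ : ℂ) • !![1, 1; 1, -1], Hmul, Hmul'⟩

lemma exp_eq :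
    NormedSpace.exp ((-(Complex.I) * ((Real.pi : ℂ) / 4)) •
      (!![0, 1; 1, 0] : Matrix (Fin 2) (Fin 2) ℂ)) = U0 := by
  set c : ℂ := -(Complex.I) * ((Real.pi : ℂ) / 4) with hc
  have key : c • (!![0, 1; 1, 0] : Matrix (Fin 2) (Fin 2) ℂ)
      = (Hu : Matrix (Fin 2) (Fin 2) ℂ) * Matrix.diagonal ![c, -c] * ((Hu⁻¹ : (Matrix (Fin 2) (Fin 2) ℂ)ˣ) : Matrix (Fin 2) (Fin 2) ℂ) := by
    show _ = !![1, 1; 1, -1] * Matrix.diagonal ![c, -c] * ((2⁻¹ : ℂ) • !![1, 1; 1, -1])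
    rw [diag2, Matrix.mul_fin_two, Matrix.mul_smul, Matrix.mul_fin_two]
    ext i j
    fin_cases i <;> fin_cases j <;> simp <;> ring
  rw [key, Matrix.exp_units_conj, Matrix.exp_diagonal]
  have hd : (NormedSpace.exp ![c, -c] : Fin 2 → ℂ) = ![s, t] := by
    funext i
    have := Pi.exp_def ![c, -c]
    rw [this]
    fin_cases i <;>
      simp [← Complex.exp_eq_exp_ℂ, s, t, hc]
  rw [hd]
  show !![1, 1; 1, -1] * Matrix.diagonal ![s, t] * ((2⁻¹ : ℂ) • !![1, 1; 1, -1]) = U0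
  rw [U0, diag2, Matrix.mul_fin_two, Matrix.mul_smul, Matrix.mul_fin_two]
  ext i j
  fin_cases i <;> fin_cases j <;> simp <;> ring

lemma M_apply (ρ : Matrix (Fin 2) (Fin 2) ℂ) :
    measuredChannel U0 ρ = (2⁻¹ : ℂ) •
      !![ρ 0 0 + ρ 1 1, Complex.I * (ρ 0 0 - ρ 1 1);
         Complex.I * (ρ 1 1 - ρ 0 0), ρ 0 0 + ρ 1 1] := by
  show U0 * Matrix.diagonal (fun i => ρ i i) * U0ᴴ = _
  rw [U0H, diag_fin_two, U0, Matrix.smul_mul, Matrix.mul_smul, Matrix.smul_mul,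
    Matrix.mul_fin_two, Matrix.mul_fin_two, smul_smul]
  have e1 : s * t = 1 := hst
  have e2 : s ^ 2 = -Complex.I := hs2
  have e3 : t ^ 2 = Complex.I := ht2
  ext i j
  fin_cases i <;> fin_cases j <;> simp [Matrix.smul_apply] <;>
    [ (linear_combination ((ρ 0 0 - ρ 1 1)/4) * e2 + ((ρ 0 0 - ρ 1 1)/4) * e3
        + ((ρ 0 0 + ρ 1 1)/2) * e1);
      (linear_combination ((ρ 0 0 - ρ 1 1)/4) * e3 - ((ρ 0 0 - ρ 1 1)/4) * e2);
      (linear_combination ((ρ 1 1 - ρ 0 0)/4) * e3 - ((ρ 1 1 - ρ 0 0)/4) * e2);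
      (linear_combination ((ρ 1 1 - ρ 0 0)/4) * e2 + ((ρ 1 1 - ρ 0 0)/4) * e3
        + ((ρ 0 0 + ρ 1 1)/2) * e1)]

end EPaux
namespace EPaux

lemma mker (ρ : Matrix (Fin 2) (Fin 2) ℂ) :
    measuredChannel U0 ρ = 0 ↔ ρ 0 0 = 0 ∧ ρ 1 1 = 0 := by
  rw [M_apply]
  constructor
  · intro h
    have h00 := congrFun (congrFun h 0) 0
    have h01 := congrFun (congrFun h 0) 1
    simp [Matrix.smul_apply] at h00 h01
    exact ⟨by linear_combination h00 / 2 + h01 / 2, by linear_combination h00 / 2 - h01 / 2⟩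
  · rintro ⟨h1, h2⟩
    ext i j
    fin_cases i <;> fin_cases j <;> simp [h1, h2]

lemma ker_eq : LinearMap.ker (measuredChannel U0)
    = LinearMap.ker (Matrix.diagLinearMap (Fin 2) ℂ ℂ) := by
  ext ρ
  simp only [LinearMap.mem_ker]
  rw [mker]
  constructor
  · rintro ⟨h1, h2⟩
    funext i
    fin_cases i <;> simpa [Matrix.diagLinearMap, Matrix.diag]
  · intro h
    exact ⟨congrFun h 0, congrFun h 1⟩

lemma finrank_ker : Module.finrank ℂ (LinearMap.ker (measuredChannel U0)) = 2 := by
  rw [ker_eq]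
  have hsurj : Function.Surjective (Matrix.diagLinearMap (Fin 2) ℂ ℂ) := by
    intro v
    exact ⟨Matrix.diagonal v, funext fun i => by simp [Matrix.diagLinearMap, Matrix.diag]⟩
  have h := LinearMap.finrank_range_add_finrank_ker (Matrix.diagLinearMap (Fin 2) ℂ ℂ)
  rw [LinearMap.range_eq_top.2 hsurj, finrank_top] at h
  simp [Module.finrank_matrix, Module.finrank_pi] at h
  omega

lemma M_sq (ρ : Matrix (Fin 2) (Fin 2) ℂ) :
    measuredChannel U0 (measuredChannel U0 ρ) = (2⁻¹ * (ρ 0 0 + ρ 1 1)) • 1 := by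
  rw [M_apply ρ, M_apply]
  ext i j
  fin_cases i <;> fin_cases j <;> simp [Matrix.smul_apply, Matrix.one_apply] <;> ring

lemma M_pow_two_apply (ρ : Matrix (Fin 2) (Fin 2) ℂ) :
    ((measuredChannel U0) ^ 2) ρ = (2⁻¹ * (ρ 0 0 + ρ 1 1)) • 1 := by
  rw [pow_two, Module.End.mul_apply, M_sq]

lemma M_pow_stable : ∀ k : ℕ, (measuredChannel U0) ^ (k + 2) = (measuredChannel U0) ^ 2 := by
  intro k
  induction k with
  | zero => rfl
  | succ n ih =>
    have : (measuredChannel U0) ^ (n + 3) = (measuredChannel U0) ^ (n + 2) * measuredChannel U0 := by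
      rw [pow_succ]
    rw [this, ih]
    ext ρ i j
    have h1 : ((measuredChannel U0) ^ 2 * measuredChannel U0) ρ
        = ((measuredChannel U0) ^ 2) (measuredChannel U0 ρ) := rfl
    rw [h1, M_pow_two_apply, M_pow_two_apply]
    have ha : (measuredChannel U0 ρ) 0 0 = 2⁻¹ * (ρ 0 0 + ρ 1 1) := by
      rw [M_apply]; simp
    have hb : (measuredChannel U0 ρ) 1 1 = 2⁻¹ * (ρ 0 0 + ρ 1 1) := by
      rw [M_apply]; simp
    rw [ha, hb]
    ring_nf

lemma sq_zero_of_pow {ρ : Matrix (Fin 2) (Fin 2) ℂ} {k : ℕ}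
    (h : ((measuredChannel U0) ^ k) ρ = 0) : ((measuredChannel U0) ^ 2) ρ = 0 := by
  have h2 : ((measuredChannel U0) ^ (2 + k)) ρ = 0 := by
    rw [pow_add, Module.End.mul_apply, h, map_zero]
  rwa [show 2 + k = k + 2 from by omega, M_pow_stable k] at h2

lemma mem_maxgen (ρ : Matrix (Fin 2) (Fin 2) ℂ) :
    ρ ∈ Module.End.maxGenEigenspace (measuredChannel U0) 0 ↔ ρ 0 0 + ρ 1 1 = 0 := by
  rw [Module.End.mem_maxGenEigenspace]
  constructor
  · rintro ⟨k, hk⟩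
    simp only [zero_smul, sub_zero] at hk
    have h2 := sq_zero_of_pow hk
    rw [M_pow_two_apply] at h2
    have h3 := congrFun (congrFun h2 0) 0
    rw [Matrix.smul_apply, Matrix.one_apply_eq, smul_eq_mul, mul_one, Matrix.zero_apply] at h3
    linear_combination 2 * h3
  · intro h
    refine ⟨2, ?_⟩
    simp only [zero_smul, sub_zero]
    rw [M_pow_two_apply, h]
    simp

lemma maxgen_eq : Module.End.maxGenEigenspace (measuredChannel U0) 0
    = LinearMap.ker (Matrix.traceLinearMap (Fin 2) ℂ ℂ) := by
  ext ρ
  rw [mem_maxgen, LinearMap.mem_ker]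
  simp [Matrix.traceLinearMap, Matrix.trace_fin_two]

lemma finrank_maxgen :
    Module.finrank ℂ (Module.End.maxGenEigenspace (measuredChannel U0) 0) = 3 := by
  rw [maxgen_eq]
  have hsurj : Function.Surjective (Matrix.traceLinearMap (Fin 2) ℂ ℂ) := by
    intro v
    refine ⟨Matrix.diagonal ![v, 0], ?_⟩
    simp [Matrix.traceLinearMap, Matrix.trace_fin_two]
  have h := LinearMap.finrank_range_add_finrank_ker (Matrix.traceLinearMap (Fin 2) ℂ ℂ)
  rw [LinearMap.range_eq_top.2 hsurj, finrank_top] at h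
  simp [Module.finrank_matrix] at h
  omega

lemma not_diagonalizable :
    ¬ ∃ b : Module.Basis (Fin 4) ℂ (Matrix (Fin 2) (Fin 2) ℂ),
        ∀ i, ∃ μ : ℂ, measuredChannel U0 (b i) = μ • b i := by
  rintro ⟨b, hb⟩
  choose μ hμ using hb
  set M := measuredChannel U0 with hM
  have key : ∀ v : Matrix (Fin 2) (Fin 2) ℂ, (M ^ 2) v = 0 → M v = 0 := by
    intro v hv
    have h1 : M v = ∑ i, (b.repr v i * μ i) • b i := by
      conv_lhs => rw [← b.sum_repr v]
      rw [map_sum]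
      simp only [_root_.map_smul, hμ, smul_smul]
    have h2 : (M ^ 2) v = ∑ i, ((b.repr v i * μ i) * μ i) • b i := by
      rw [pow_two, Module.End.mul_apply, h1, map_sum]
      simp only [_root_.map_smul, hμ, smul_smul]
    rw [h2] at hv
    have hcoef : ∀ i, (b.repr v i * μ i) * μ i = 0 :=
      Fintype.linearIndependent_iff.mp b.linearIndependent _ hv
    have hcoef' : ∀ i, b.repr v i * μ i = 0 := by
      intro i
      rcases mul_eq_zero.mp (hcoef i) with h | h
      · exact h
      · rw [h, mul_zero]
    rw [h1]
    simp [hcoef']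
  -- maxGen ≤ ker M, so 3 ≤ 2
  have hle : Module.End.maxGenEigenspace M 0 ≤ LinearMap.ker M := by
    intro ρ hρ
    rw [Module.End.mem_maxGenEigenspace] at hρ
    rcases hρ with ⟨k, hk⟩
    simp only [zero_smul, sub_zero] at hk
    have h2 := sq_zero_of_pow hk
    exact LinearMap.mem_ker.mpr (key ρ h2)
  have h32 := Submodule.finrank_mono hle
  rw [finrank_maxgen, finrank_ker] at h32
  omega

end EPaux

/-- Exceptional point of the measured channel: for `U = exp (-i (π/4) σₓ)`, the kernel of
`M : ρ ↦ U · D(ρ) · U†` is 2-dimensional while the generalized eigenspace for eigenvalue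
`0` is 3-dimensional; in particular `M` admits no eigenbasis, i.e. is not
diagonalizable. -/
theorem measuredChannel_exceptional_point :
    Module.finrank ℂ
      (LinearMap.ker (measuredChannel (NormedSpace.exp
        ((-(Complex.I) * ((Real.pi : ℂ) / 4)) •
          (!![0, 1; 1, 0] : Matrix (Fin 2) (Fin 2) ℂ))))) = 2 ∧
    Module.finrank ℂ
      (Module.End.maxGenEigenspace (measuredChannel (NormedSpace.exp
        ((-(Complex.I) * ((Real.pi : ℂ) / 4)) •
          (!![0, 1; 1, 0] : Matrix (Fin 2) (Fin 2) ℂ)))) 0) = 3 ∧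
    ¬ ∃ b : Module.Basis (Fin 4) ℂ (Matrix (Fin 2) (Fin 2) ℂ),
        ∀ i, ∃ μ : ℂ, measuredChannel (NormedSpace.exp
          ((-(Complex.I) * ((Real.pi : ℂ) / 4)) •
            (!![0, 1; 1, 0] : Matrix (Fin 2) (Fin 2) ℂ))) (b i) = μ • b i := by
  rw [EPaux.exp_eq]
  exact ⟨EPaux.finrank_ker, EPaux.finrank_maxgen, EPaux.not_diagonalizable⟩
end
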